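/- Let G be a finite connected simple graph of order n ≥ 9 with τ(G) = n−4 whose twin class W of cardinality n−4 induces a complete subgraph of G. If |N(W) ∖ W| = 2, where N(W) is the union of the open neighborhoods of the vertices of W, then β_p(G) = n−3. -/

import Mathlib

open Classical SimpleGraph

noncomputable section

/-- The distance from a vertex to a set of vertices. -/
def setDist {V : Type*} (G : SimpleGraph V) (u : V) (S : Set V) : ℕ :=
  sInf ((G.dist u) '' S)

/-- A locating partition of a graph: a partition of the vertex set such that every
vertex is uniquely determined by its vector of distances to the parts. -/
def IsLocatingPartition {V : Type*} (G : SimpleGraph V) (P : Set (Set V)) : Prop :=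
  Setoid.IsPartition P ∧
    ∀ u v : V, (∀ S ∈ P, setDist G u S = setDist G v S) → u = v

/-- The partition dimension: the minimum cardinality of a locating partition. -/
def partitionDim {V : Type*} (G : SimpleGraph V) : ℕ :=
  sInf {k | ∃ P : Set (Set V), IsLocatingPartition G P ∧ P.ncard = k}

/-- Two vertices are twins if they have the same neighbors other than themselves. -/
def IsTwin {V : Type*} (G : SimpleGraph V) (u v : V) : Prop :=
  G.neighborSet u \ {v} = G.neighborSet v \ {u}

/-- The twin class of a vertex. -/
def twinClass {V : Type*} (G : SimpleGraph V) (u : V) : Set V :=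
  {v | IsTwin G u v}

/-- The twin number: the maximum cardinality of a twin class. -/
def twinNumber {V : Type*} (G : SimpleGraph V) : ℕ :=
  sSup {k | ∃ u : V, (twinClass G u).ncard = k}

/-! ### Auxiliary lemmas -/

section Aux
variable {V : Type*} {G : SimpleGraph V}

lemma setDist_le {u z : V} {S : Set V} (h : z ∈ S) : setDist G u S ≤ G.dist u z :=
  Nat.sInf_le ⟨z, h, rfl⟩

lemma setDist_singleton (u z : V) : setDist G u {z} = G.dist u z := by
  unfold setDist
  rw [Set.image_singleton, csInf_singleton _]

lemma sInf_pair' (m m' : ℕ) : sInf ({m, m'} : Set ℕ) = min m m' := by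
  apply le_antisymm
  · exact le_min (Nat.sInf_le (by simp)) (Nat.sInf_le (by simp))
  · have h : sInf ({m, m'} : Set ℕ) ∈ ({m, m'} : Set ℕ) :=
      Nat.sInf_mem ⟨m, by simp⟩
    rcases h with h | h
    · rw [h]; exact min_le_left _ _
    · rw [h]; exact min_le_right _ _

lemma setDist_pair (u z z' : V) :
    setDist G u {z, z'} = min (G.dist u z) (G.dist u z') := by
  unfold setDist
  rw [Set.image_insert_eq, Set.image_singleton, sInf_pair']

lemma setDist_eq_zero_of_mem {u : V} {S : Set V} (h : u ∈ S) : setDist G u S = 0 :=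
  Nat.sInf_eq_zero.mpr (Or.inl ⟨u, h, SimpleGraph.dist_self⟩)

lemma mem_of_setDist_eq_zero (hG : G.Connected) {u : V} {S : Set V}
    (hS : S.Nonempty) (h : setDist G u S = 0) : u ∈ S := by
  rcases Nat.sInf_eq_zero.mp h with h0 | hemp
  · obtain ⟨z, hz, hd⟩ := h0
    rwa [(hG.dist_eq_zero_iff).mp hd]
  · obtain ⟨z, hz⟩ := hS
    exact absurd hemp (by simp [Set.eq_empty_iff_forall_notMem]; exact ⟨z, hz⟩)

lemma one_le_setDist (hG : G.Connected) {u : V} {S : Set V}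
    (hS : S.Nonempty) (h : u ∉ S) : 1 ≤ setDist G u S := by
  rcases Nat.eq_zero_or_pos (setDist G u S) with h0 | h1
  · exact absurd (mem_of_setDist_eq_zero hG hS h0) h
  · exact h1

lemma dist_ge_two (hG : G.Connected) {u v : V} (hne : u ≠ v) (hadj : ¬ G.Adj u v) :
    2 ≤ G.dist u v := by
  have h1 : G.dist u v ≠ 1 := fun h => hadj (SimpleGraph.dist_eq_one_iff_adj.mp h)
  have h0 : 0 < G.dist u v := hG.pos_dist_of_ne hne
  omega

lemma dist_eq_of_twin (hG : G.Connected) {u v : V}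
    (ht : ∀ z, z ≠ u → z ≠ v → (G.Adj u z ↔ G.Adj v z)) :
    ∀ z, z ≠ u → z ≠ v → G.dist u z = G.dist v z := by
  have key : ∀ p q : V, (∀ z, z ≠ p → z ≠ q → (G.Adj p z ↔ G.Adj q z)) →
      ∀ z, z ≠ p → z ≠ q → G.dist p z ≤ G.dist q z := by
    intro p q htw z hzp hzq
    obtain ⟨r, hr⟩ := (hG.preconnected q z).exists_walk_length_eq_dist
    cases r with
    | nil => exact absurd rfl hzq.symm
    | cons h w =>
      rename_i c
      by_cases hcp : c = p
      · subst hcp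
        have := SimpleGraph.dist_le w
        simp [SimpleGraph.Walk.length_cons] at hr
        omega
      · have hcq : c ≠ q := fun hh => G.ne_of_adj h (hh.symm)
        have hpc : G.Adj p c := (htw c (fun hh => hcp hh) hcq).mpr h
        have := SimpleGraph.dist_le (SimpleGraph.Walk.cons hpc w)
        simp [SimpleGraph.Walk.length_cons] at hr this
        omega
  intro z hzp hzq
  exact le_antisymm (key _ _ ht z hzp hzq)
    (key _ _ (fun z h1 h2 => (ht z h2 h1).symm) z hzq hzp)

lemma twin_adj_iff {p q : V} (h : IsTwin G p q) :
    ∀ z, z ≠ p → z ≠ q → (G.Adj p z ↔ G.Adj q z) := by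
  intro z hzp hzq
  have h' := Set.ext_iff.mp h z
  simp only [Set.mem_diff, SimpleGraph.mem_neighborSet, Set.mem_singleton_iff] at h'
  constructor
  · intro ha; exact (h'.mp ⟨ha, hzq⟩).1
  · intro ha; exact (h'.mpr ⟨ha, hzp⟩).1

lemma fiberPartition (f : V → V) :
    Setoid.IsPartition {S : Set V | ∃ v, S = f ⁻¹' {f v}} := by
  constructor
  · rintro ⟨v, hv⟩
    have : v ∈ (∅ : Set V) := hv ▸ (by simp : v ∈ f ⁻¹' {f v})
    exact this
  · intro a
    refine ⟨f ⁻¹' {f a}, ⟨⟨a, rfl⟩, by simp⟩, ?_⟩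
    rintro S ⟨⟨v, rfl⟩, haS⟩
    have : f a = f v := haS
    rw [this]

lemma fiber_ncard (f : V → V) (hf : ∀ v, f (f v) = f v) :
    {S : Set V | ∃ v, S = f ⁻¹' {f v}}.ncard = (Set.range f).ncard := by
  have heq : {S : Set V | ∃ v, S = f ⁻¹' {f v}} = (fun r => f ⁻¹' {r}) '' (Set.range f) := by
    ext S
    constructor
    · rintro ⟨v, rfl⟩; exact ⟨f v, ⟨v, rfl⟩, rfl⟩
    · rintro ⟨r, ⟨v, rfl⟩, rfl⟩; exact ⟨v, rfl⟩
  rw [heq]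
  apply Set.ncard_image_of_injOn
  rintro r₁ ⟨v₁, rfl⟩ r₂ ⟨v₂, rfl⟩ hpre
  have h1 : f v₁ ∈ f ⁻¹' {f v₁} := by simp [hf v₁]
  simp only at hpre
  rw [hpre] at h1
  simpa [hf v₁] using h1

lemma fiber_locating {G : SimpleGraph V} (hG : G.Connected) (f : V → V)
    (h : ∀ u v : V, f u = f v → u ≠ v →
      ∃ S, (∃ w, S = f ⁻¹' {f w}) ∧ setDist G u S ≠ setDist G v S) :
    IsLocatingPartition G {S : Set V | ∃ v, S = f ⁻¹' {f v}} := by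
  refine ⟨fiberPartition f, ?_⟩
  intro u v huv
  by_contra hne
  rcases eq_or_ne (f u) (f v) with hfe | hfne
  · obtain ⟨S, hS, hsd⟩ := h u v hfe hne
    exact hsd (huv S hS)
  · have h0 : setDist G u (f ⁻¹' {f u}) = 0 := setDist_eq_zero_of_mem (by simp)
    have h1 := huv _ ⟨u, rfl⟩
    rw [h0] at h1
    have hv : v ∈ f ⁻¹' {f u} :=
      mem_of_setDist_eq_zero hG ⟨u, by simp⟩ h1.symm
    have : f v = f u := by simpa using hv
    exact hfne this.symm

end Aux

/-! ### The two partition constructions -/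

section Construct
variable {V : Type*} [Fintype V] {G : SimpleGraph V}

/-- Construction where one exterior vertex `e` forms a singleton part,
and the three other exterior vertices `p₁, p₂, p₃` are paired with
distinct clique vertices `w₁, w₂, w₃`. -/
lemma constructADE (hG : G.Connected) (W : Set V)
    (e p₁ p₂ p₃ w₁ w₂ w₃ w₄ : V)
    (hw₁ : w₁ ∈ W) (hw₂ : w₂ ∈ W) (hw₃ : w₃ ∈ W) (hw₄ : w₄ ∈ W)
    (h12 : w₁ ≠ w₂) (h13 : w₁ ≠ w₃) (h14 : w₁ ≠ w₄)
    (h23 : w₂ ≠ w₃) (h24 : w₂ ≠ w₄) (h34 : w₃ ≠ w₄)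
    (heW : e ∉ W) (hp₁W : p₁ ∉ W) (hp₂W : p₂ ∉ W) (hp₃W : p₃ ∉ W)
    (hep₁ : e ≠ p₁) (hep₂ : e ≠ p₂) (hep₃ : e ≠ p₃)
    (hp₁₂ : p₁ ≠ p₂) (hp₁₃ : p₁ ≠ p₃) (hp₂₃ : p₂ ≠ p₃)
    (hdec : ∀ v : V, v ∈ W ∨ v = e ∨ v = p₁ ∨ v = p₂ ∨ v = p₃)
    (hs₁ : G.dist p₁ e ≠ G.dist w₁ e ∨ G.dist p₁ w₄ ≠ G.dist w₁ w₄)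
    (hs₂ : G.dist p₂ e ≠ G.dist w₂ e ∨ G.dist p₂ w₄ ≠ G.dist w₂ w₄)
    (hs₃ : G.dist p₃ e ≠ G.dist w₃ e ∨ G.dist p₃ w₄ ≠ G.dist w₃ w₄) :
    ∃ P : Set (Set V), IsLocatingPartition G P ∧ P.ncard = W.ncard + 1 := by
  set f : V → V := fun v =>
    if v = e then e else if v = p₁ then w₁ else if v = p₂ then w₂ else
      if v = p₃ then w₃ else v with hfdef
  have hfe : f e = e := by simp [hfdef]
  have hfp₁ : f p₁ = w₁ := by simp [hfdef, hep₁.symm]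
  have hfp₂ : f p₂ = w₂ := by simp [hfdef, hep₂.symm, hp₁₂.symm]
  have hfp₃ : f p₃ = w₃ := by simp [hfdef, hep₃.symm, hp₁₃.symm, hp₂₃.symm]
  have hfW : ∀ z ∈ W, f z = z := by
    intro z hz
    have h1 : z ≠ e := fun h => heW (h ▸ hz)
    have h2 : z ≠ p₁ := fun h => hp₁W (h ▸ hz)
    have h3 : z ≠ p₂ := fun h => hp₂W (h ▸ hz)
    have h4 : z ≠ p₃ := fun h => hp₃W (h ▸ hz)
    simp [hfdef, h1, h2, h3, h4]
  have hidem : ∀ v, f (f v) = f v := by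
    intro v
    rcases hdec v with hv | hv | hv | hv | hv
    · rw [hfW v hv, hfW v hv]
    · rw [hv, hfe, hfe]
    · rw [hv, hfp₁, hfW w₁ hw₁]
    · rw [hv, hfp₂, hfW w₂ hw₂]
    · rw [hv, hfp₃, hfW w₃ hw₃]
  have hrange : Set.range f = insert e W := by
    ext r
    constructor
    · rintro ⟨v, rfl⟩
      rcases hdec v with hv | hv | hv | hv | hv
      · rw [hfW v hv]; exact Or.inr hv
      · rw [hv, hfe]; exact Or.inl rfl
      · rw [hv, hfp₁]; exact Or.inr hw₁
      · rw [hv, hfp₂]; exact Or.inr hw₂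
      · rw [hv, hfp₃]; exact Or.inr hw₃
    · rintro (rfl | hr)
      · exact ⟨r, hfe⟩
      · exact ⟨r, hfW r hr⟩
  have hfib_e : f ⁻¹' {f e} = {e} := by
    rw [hfe]
    ext z
    simp only [Set.mem_preimage, Set.mem_singleton_iff]
    constructor
    · intro hz
      rcases hdec z with h | h | h | h | h
      · rwa [hfW z h] at hz
      · exact h
      · rw [h, hfp₁] at hz; exact absurd (hz ▸ hw₁) heW
      · rw [h, hfp₂] at hz; exact absurd (hz ▸ hw₂) heW
      · rw [h, hfp₃] at hz; exact absurd (hz ▸ hw₃) heW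
    · intro hz; rw [hz]; exact hfe
  have hfib_w₄ : f ⁻¹' {f w₄} = {w₄} := by
    rw [hfW w₄ hw₄]
    ext z
    simp only [Set.mem_preimage, Set.mem_singleton_iff]
    constructor
    · intro hz
      rcases hdec z with h | h | h | h | h
      · rwa [hfW z h] at hz
      · rw [h, hfe] at hz; exact absurd (hz ▸ hw₄) heW
      · rw [h, hfp₁] at hz; exact absurd hz h14
      · rw [h, hfp₂] at hz; exact absurd hz h24
      · rw [h, hfp₃] at hz; exact absurd hz h34
    · intro hz; rw [hz]; exact hfW w₄ hw₄
  -- distinguishers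
  have hD : ∀ (p w : V), (G.dist p e ≠ G.dist w e ∨ G.dist p w₄ ≠ G.dist w w₄) →
      ∃ S, (∃ t, S = f ⁻¹' {f t}) ∧ setDist G p S ≠ setDist G w S := by
    rintro p w (h | h)
    · exact ⟨f ⁻¹' {f e}, ⟨e, rfl⟩, by
        rw [hfib_e, setDist_singleton, setDist_singleton]; exact h⟩
    · exact ⟨f ⁻¹' {f w₄}, ⟨w₄, rfl⟩, by
        rw [hfib_w₄, setDist_singleton, setDist_singleton]; exact h⟩
  have hsymm : ∀ (p q : V),
      (∃ S, (∃ t, S = f ⁻¹' {f t}) ∧ setDist G p S ≠ setDist G q S) →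
      ∃ S, (∃ t, S = f ⁻¹' {f t}) ∧ setDist G q S ≠ setDist G p S := by
    rintro p q ⟨S, hS, hne⟩; exact ⟨S, hS, hne.symm⟩
  have hsep : ∀ u v : V, f u = f v → u ≠ v →
      ∃ S, (∃ t, S = f ⁻¹' {f t}) ∧ setDist G u S ≠ setDist G v S := by
    intro u v hfe' hne
    rcases hdec u with hu | hu | hu | hu | hu
    · rw [hfW u hu] at hfe'
      rcases hdec v with hv | hv | hv | hv | hv
      · rw [hfW v hv] at hfe'; exact absurd hfe' hne
      · rw [hv, hfe] at hfe'; exact absurd (hfe' ▸ hu) heW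
      · rw [hv, hfp₁] at hfe'; rw [hv, hfe']; exact hsymm _ _ (hD p₁ w₁ hs₁)
      · rw [hv, hfp₂] at hfe'; rw [hv, hfe']; exact hsymm _ _ (hD p₂ w₂ hs₂)
      · rw [hv, hfp₃] at hfe'; rw [hv, hfe']; exact hsymm _ _ (hD p₃ w₃ hs₃)
    · rw [hu, hfe] at hfe'
      rcases hdec v with hv | hv | hv | hv | hv
      · rw [hfW v hv] at hfe'; exact absurd (hfe'.symm ▸ hv) heW
      · rw [hu, hv] at hne; exact absurd rfl hne
      · rw [hv, hfp₁] at hfe'; exact absurd (hfe' ▸ hw₁) heW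
      · rw [hv, hfp₂] at hfe'; exact absurd (hfe' ▸ hw₂) heW
      · rw [hv, hfp₃] at hfe'; exact absurd (hfe' ▸ hw₃) heW
    · rw [hu, hfp₁] at hfe'
      rcases hdec v with hv | hv | hv | hv | hv
      · rw [hfW v hv] at hfe'; rw [hu, ← hfe']; exact hD p₁ w₁ hs₁
      · rw [hv, hfe] at hfe'; exact absurd (hfe'.symm ▸ hw₁) heW
      · rw [hu, hv] at hne; exact absurd rfl hne
      · rw [hv, hfp₂] at hfe'; exact absurd hfe' h12
      · rw [hv, hfp₃] at hfe'; exact absurd hfe' h13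
    · rw [hu, hfp₂] at hfe'
      rcases hdec v with hv | hv | hv | hv | hv
      · rw [hfW v hv] at hfe'; rw [hu, ← hfe']; exact hD p₂ w₂ hs₂
      · rw [hv, hfe] at hfe'; exact absurd (hfe'.symm ▸ hw₂) heW
      · rw [hv, hfp₁] at hfe'; exact absurd hfe'.symm h12
      · rw [hu, hv] at hne; exact absurd rfl hne
      · rw [hv, hfp₃] at hfe'; exact absurd hfe' h23
    · rw [hu, hfp₃] at hfe'
      rcases hdec v with hv | hv | hv | hv | hv
      · rw [hfW v hv] at hfe'; rw [hu, ← hfe']; exact hD p₃ w₃ hs₃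
      · rw [hv, hfe] at hfe'; exact absurd (hfe'.symm ▸ hw₃) heW
      · rw [hv, hfp₁] at hfe'; exact absurd hfe'.symm h13
      · rw [hv, hfp₂] at hfe'; exact absurd hfe'.symm h23
      · rw [hu, hv] at hne; exact absurd rfl hne
  refine ⟨_, fiber_locating hG f hsep, ?_⟩
  rw [fiber_ncard f hidem, hrange, Set.ncard_insert_of_notMem heW W.toFinite]

/-- Construction where two exterior vertices `q₁, q₂` form one part,
and the two other exterior vertices `p₁, p₂` are paired with
distinct clique vertices `w₁, w₂`. -/
lemma constructK (hG : G.Connected) (W : Set V)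
    (p₁ p₂ q₁ q₂ w₁ w₂ : V)
    (hw₁ : w₁ ∈ W) (hw₂ : w₂ ∈ W) (h12 : w₁ ≠ w₂)
    (hp₁W : p₁ ∉ W) (hp₂W : p₂ ∉ W) (hq₁W : q₁ ∉ W) (hq₂W : q₂ ∉ W)
    (hpp : p₁ ≠ p₂) (hpq₁ : p₁ ≠ q₁) (hpq₂ : p₁ ≠ q₂)
    (hp₂q₁ : p₂ ≠ q₁) (hp₂q₂ : p₂ ≠ q₂) (hqq : q₁ ≠ q₂)
    (hdec : ∀ v : V, v ∈ W ∨ v = p₁ ∨ v = p₂ ∨ v = q₁ ∨ v = q₂)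
    (hs₁ : min (G.dist p₁ q₁) (G.dist p₁ q₂) ≠ min (G.dist w₁ q₁) (G.dist w₁ q₂))
    (hs₂ : min (G.dist p₂ q₁) (G.dist p₂ q₂) ≠ min (G.dist w₂ q₁) (G.dist w₂ q₂))
    (hs₃ : min (G.dist q₁ w₁) (G.dist q₁ p₁) ≠ min (G.dist q₂ w₁) (G.dist q₂ p₁)) :
    ∃ P : Set (Set V), IsLocatingPartition G P ∧ P.ncard = W.ncard + 1 := by
  set f : V → V := fun v =>
    if v = p₁ then w₁ else if v = p₂ then w₂ else if v = q₁ then q₁ else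
      if v = q₂ then q₁ else v with hfdef
  have hfp₁ : f p₁ = w₁ := by simp [hfdef]
  have hfp₂ : f p₂ = w₂ := by simp [hfdef, hpp.symm]
  have hfq₁ : f q₁ = q₁ := by simp [hfdef, hpq₁.symm, hp₂q₁.symm]
  have hfq₂ : f q₂ = q₁ := by simp [hfdef, hpq₂.symm, hp₂q₂.symm, hqq.symm]
  have hfW : ∀ z ∈ W, f z = z := by
    intro z hz
    have h1 : z ≠ p₁ := fun h => hp₁W (h ▸ hz)
    have h2 : z ≠ p₂ := fun h => hp₂W (h ▸ hz)
    have h3 : z ≠ q₁ := fun h => hq₁W (h ▸ hz)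
    have h4 : z ≠ q₂ := fun h => hq₂W (h ▸ hz)
    simp [hfdef, h1, h2, h3, h4]
  have hidem : ∀ v, f (f v) = f v := by
    intro v
    rcases hdec v with hv | hv | hv | hv | hv
    · rw [hfW v hv, hfW v hv]
    · rw [hv, hfp₁, hfW w₁ hw₁]
    · rw [hv, hfp₂, hfW w₂ hw₂]
    · rw [hv, hfq₁, hfq₁]
    · rw [hv, hfq₂, hfq₁]
  have hrange : Set.range f = insert q₁ W := by
    ext r
    constructor
    · rintro ⟨v, rfl⟩
      rcases hdec v with hv | hv | hv | hv | hv
      · rw [hfW v hv]; exact Or.inr hv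
      · rw [hv, hfp₁]; exact Or.inr hw₁
      · rw [hv, hfp₂]; exact Or.inr hw₂
      · rw [hv, hfq₁]; exact Or.inl rfl
      · rw [hv, hfq₂]; exact Or.inl rfl
    · rintro (rfl | hr)
      · exact ⟨r, hfq₁⟩
      · exact ⟨r, hfW r hr⟩
  have hfib_q : f ⁻¹' {f q₁} = {q₁, q₂} := by
    rw [hfq₁]
    ext z
    simp only [Set.mem_preimage, Set.mem_singleton_iff, Set.mem_insert_iff]
    constructor
    · intro hz
      rcases hdec z with h | h | h | h | h
      · rw [hfW z h] at hz; exact absurd (hz ▸ h) hq₁W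
      · rw [h, hfp₁] at hz; exact absurd (hz.symm ▸ hw₁) hq₁W
      · rw [h, hfp₂] at hz; exact absurd (hz.symm ▸ hw₂) hq₁W
      · exact Or.inl h
      · exact Or.inr h
    · rintro (h | h)
      · rw [h]; exact hfq₁
      · rw [h]; exact hfq₂
  have hfib_p₁ : f ⁻¹' {f p₁} = {w₁, p₁} := by
    rw [hfp₁]
    ext z
    simp only [Set.mem_preimage, Set.mem_singleton_iff, Set.mem_insert_iff]
    constructor
    · intro hz
      rcases hdec z with h | h | h | h | h
      · rw [hfW z h] at hz; exact Or.inl hz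
      · exact Or.inr h
      · rw [h, hfp₂] at hz; exact absurd hz.symm h12
      · rw [h, hfq₁] at hz; exact absurd (hz ▸ hw₁) hq₁W
      · rw [h, hfq₂] at hz; exact absurd (hz ▸ hw₁) hq₁W
    · rintro (h | h)
      · rw [h]; exact hfW w₁ hw₁
      · rw [h]; exact hfp₁
  have hD₁ : ∃ S, (∃ t, S = f ⁻¹' {f t}) ∧ setDist G p₁ S ≠ setDist G w₁ S :=
    ⟨f ⁻¹' {f q₁}, ⟨q₁, rfl⟩, by
      rw [hfib_q, setDist_pair, setDist_pair]; exact hs₁⟩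
  have hD₂ : ∃ S, (∃ t, S = f ⁻¹' {f t}) ∧ setDist G p₂ S ≠ setDist G w₂ S :=
    ⟨f ⁻¹' {f q₁}, ⟨q₁, rfl⟩, by
      rw [hfib_q, setDist_pair, setDist_pair]; exact hs₂⟩
  have hD₃ : ∃ S, (∃ t, S = f ⁻¹' {f t}) ∧ setDist G q₁ S ≠ setDist G q₂ S :=
    ⟨f ⁻¹' {f p₁}, ⟨p₁, rfl⟩, by
      rw [hfib_p₁, setDist_pair, setDist_pair]; exact hs₃⟩
  have hsymm : ∀ (p q : V),
      (∃ S, (∃ t, S = f ⁻¹' {f t}) ∧ setDist G p S ≠ setDist G q S) →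
      ∃ S, (∃ t, S = f ⁻¹' {f t}) ∧ setDist G q S ≠ setDist G p S := by
    rintro p q ⟨S, hS, hne⟩; exact ⟨S, hS, hne.symm⟩
  have hsep : ∀ u v : V, f u = f v → u ≠ v →
      ∃ S, (∃ t, S = f ⁻¹' {f t}) ∧ setDist G u S ≠ setDist G v S := by
    intro u v hfe' hne
    rcases hdec u with hu | hu | hu | hu | hu
    · rw [hfW u hu] at hfe'
      rcases hdec v with hv | hv | hv | hv | hv
      · rw [hfW v hv] at hfe'; exact absurd hfe' hne
      · rw [hv, hfp₁] at hfe'; rw [hv, hfe']; exact hsymm _ _ hD₁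
      · rw [hv, hfp₂] at hfe'; rw [hv, hfe']; exact hsymm _ _ hD₂
      · rw [hv, hfq₁] at hfe'; exact absurd (hfe' ▸ hu) hq₁W
      · rw [hv, hfq₂] at hfe'; exact absurd (hfe' ▸ hu) hq₁W
    · rw [hu, hfp₁] at hfe'
      rcases hdec v with hv | hv | hv | hv | hv
      · rw [hfW v hv] at hfe'; rw [hu, ← hfe']; exact hD₁
      · rw [hu, hv] at hne; exact absurd rfl hne
      · rw [hv, hfp₂] at hfe'; exact absurd hfe' h12
      · rw [hv, hfq₁] at hfe'; exact absurd (hfe'.symm ▸ hw₁) hq₁W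
      · rw [hv, hfq₂] at hfe'; exact absurd (hfe'.symm ▸ hw₁) hq₁W
    · rw [hu, hfp₂] at hfe'
      rcases hdec v with hv | hv | hv | hv | hv
      · rw [hfW v hv] at hfe'; rw [hu, ← hfe']; exact hD₂
      · rw [hv, hfp₁] at hfe'; exact absurd hfe'.symm h12
      · rw [hu, hv] at hne; exact absurd rfl hne
      · rw [hv, hfq₁] at hfe'; exact absurd (hfe'.symm ▸ hw₂) hq₁W
      · rw [hv, hfq₂] at hfe'; exact absurd (hfe'.symm ▸ hw₂) hq₁W
    · rw [hu, hfq₁] at hfe'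
      rcases hdec v with hv | hv | hv | hv | hv
      · rw [hfW v hv] at hfe'; exact absurd (hfe'.symm ▸ hv) hq₁W
      · rw [hv, hfp₁] at hfe'; exact absurd (hfe' ▸ hw₁) hq₁W
      · rw [hv, hfp₂] at hfe'; exact absurd (hfe' ▸ hw₂) hq₁W
      · rw [hu, hv] at hne; exact absurd rfl hne
      · rw [hu, hv]; exact hD₃
    · rw [hu, hfq₂] at hfe'
      rcases hdec v with hv | hv | hv | hv | hv
      · rw [hfW v hv] at hfe'; exact absurd (hfe'.symm ▸ hv) hq₁W
      · rw [hv, hfp₁] at hfe'; exact absurd (hfe' ▸ hw₁) hq₁W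
      · rw [hv, hfp₂] at hfe'; exact absurd (hfe' ▸ hw₂) hq₁W
      · rw [hu, hv]; exact hsymm _ _ hD₃
      · rw [hu, hv] at hne; exact absurd rfl hne
  refine ⟨_, fiber_locating hG f hsep, ?_⟩
  rw [fiber_ncard f hidem, hrange, Set.ncard_insert_of_notMem hq₁W W.toFinite]

end Construct

/-! ### The main theorem -/

/-- Let `G` be a connected graph of order `n ≥ 9` with `τ(G) = n - 4` whose
maximum twin class `W` induces a complete subgraph. If `|N(W) \ W| = 2`,
then `β_p(G) = n - 3`. -/
theorem partitionDim_eq_of_small_boundary {V : Type*} [Fintype V]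
    (G : SimpleGraph V) (hG : G.Connected) (n : ℕ) (hn : Fintype.card V = n)
    (h9 : 9 ≤ n) (hτ : twinNumber G = n - 4)
    (W : Set V) (hW : ∃ u : V, W = twinClass G u)
    (hWcard : W.ncard = n - 4)
    (hclique : ∀ u ∈ W, ∀ v ∈ W, u ≠ v → G.Adj u v)
    (hN : (((⋃ w ∈ W, G.neighborSet w)) \ W).ncard = 2) :
    partitionDim G = n - 3 := by
  classical
  obtain ⟨u₀, hWu⟩ := hW
  have hu₀ : u₀ ∈ W := by
    rw [hWu]
    show IsTwin G u₀ u₀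
    rfl
  have hWt : ∀ w ∈ W, IsTwin G u₀ w := by
    intro w hw
    rw [hWu] at hw
    exact hw
  obtain ⟨x, y, hxy, hBxy⟩ := Set.ncard_eq_two.mp hN
  have hxB : x ∈ (⋃ w ∈ W, G.neighborSet w) \ W := by
    rw [hBxy]; exact Set.mem_insert _ _
  have hyB : y ∈ (⋃ w ∈ W, G.neighborSet w) \ W := by
    rw [hBxy]; exact Set.mem_insert_iff.mpr (Or.inr rfl)
  have hxW : x ∉ W := hxB.2
  have hyW : y ∉ W := hyB.2
  have hadjWx : ∀ w ∈ W, G.Adj w x := by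
    have hx1 := hxB.1
    simp only [Set.mem_iUnion, SimpleGraph.mem_neighborSet] at hx1
    obtain ⟨w₀, hw₀, hadj₀⟩ := hx1
    intro w hw
    have hxu : x ≠ u₀ := fun h => hxW (h ▸ hu₀)
    have h1 : G.Adj u₀ x :=
      (twin_adj_iff (hWt w₀ hw₀) x hxu (fun h => hxW (h ▸ hw₀))).mpr hadj₀
    exact (twin_adj_iff (hWt w hw) x hxu (fun h => hxW (h ▸ hw))).mp h1
  have hadjWy : ∀ w ∈ W, G.Adj w y := by
    have hy1 := hyB.1
    simp only [Set.mem_iUnion, SimpleGraph.mem_neighborSet] at hy1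
    obtain ⟨w₀, hw₀, hadj₀⟩ := hy1
    intro w hw
    have hyu : y ≠ u₀ := fun h => hyW (h ▸ hu₀)
    have h1 : G.Adj u₀ y :=
      (twin_adj_iff (hWt w₀ hw₀) y hyu (fun h => hyW (h ▸ hw₀))).mpr hadj₀
    exact (twin_adj_iff (hWt w hw) y hyu (fun h => hyW (h ▸ hw))).mp h1
  -- the two remaining exterior vertices
  have hdisjWxy : Disjoint W ({x, y} : Set V) := by
    rw [Set.disjoint_left]
    intro z hz hmem
    rcases hmem with h | h
    · exact hxW (h ▸ hz)
    · exact hyW (h ▸ hz)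
  have hUcard : (W ∪ {x, y} : Set V).ncard = n - 2 := by
    rw [Set.ncard_union_eq hdisjWxy W.toFinite (Set.toFinite _), hWcard,
      Set.ncard_pair hxy]
    omega
  have hCcard : ((W ∪ {x, y} : Set V)ᶜ).ncard = 2 := by
    have h := Set.ncard_add_ncard_compl (W ∪ {x, y} : Set V) (Set.toFinite _) (Set.toFinite _)
    rw [hUcard, Nat.card_eq_fintype_card, hn] at h
    omega
  obtain ⟨a, b, hab, hCab⟩ := Set.ncard_eq_two.mp hCcard
  have haC : a ∈ (W ∪ {x, y} : Set V)ᶜ := by rw [hCab]; exact Set.mem_insert _ _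
  have hbC : b ∈ (W ∪ {x, y} : Set V)ᶜ := by
    rw [hCab]; exact Set.mem_insert_iff.mpr (Or.inr rfl)
  have haW : a ∉ W := fun h => haC (Set.mem_union_left _ h)
  have hbW : b ∉ W := fun h => hbC (Set.mem_union_left _ h)
  have hax : a ≠ x := fun h => haC (Set.mem_union_right _ (by rw [h]; exact Set.mem_insert _ _))
  have hay : a ≠ y := fun h =>
    haC (Set.mem_union_right _ (by rw [h]; exact Set.mem_insert_iff.mpr (Or.inr rfl)))
  have hbx : b ≠ x := fun h => hbC (Set.mem_union_right _ (by rw [h]; exact Set.mem_insert _ _))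
  have hby : b ≠ y := fun h =>
    hbC (Set.mem_union_right _ (by rw [h]; exact Set.mem_insert_iff.mpr (Or.inr rfl)))
  have hnoadj : ∀ c : V, c ∈ (W ∪ {x, y} : Set V)ᶜ → ∀ w ∈ W, ¬ G.Adj w c := by
    intro c hc w hw hadj
    have hcB : c ∈ (⋃ w ∈ W, G.neighborSet w) \ W := by
      refine ⟨?_, fun h => hc (Set.mem_union_left _ h)⟩
      simp only [Set.mem_iUnion, SimpleGraph.mem_neighborSet]
      exact ⟨w, hw, hadj⟩
    rw [hBxy] at hcB
    exact hc (Set.mem_union_right _ hcB)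
  have hnoadja : ∀ w ∈ W, ¬ G.Adj w a := hnoadj a haC
  have hnoadjb : ∀ w ∈ W, ¬ G.Adj w b := hnoadj b hbC
  have hdec : ∀ v : V, v ∈ W ∨ v = x ∨ v = y ∨ v = a ∨ v = b := by
    intro v
    by_cases h1 : v ∈ W
    · exact Or.inl h1
    by_cases h2 : v = x
    · exact Or.inr (Or.inl h2)
    by_cases h3 : v = y
    · exact Or.inr (Or.inr (Or.inl h3))
    have hvC : v ∈ (W ∪ {x, y} : Set V)ᶜ := by
      intro hmem
      rcases hmem with h | h
      · exact h1 h
      · rcases h with h | h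
        · exact h2 h
        · exact h3 h
    rw [hCab] at hvC
    rcases hvC with h | h
    · exact Or.inr (Or.inr (Or.inr (Or.inl h)))
    · exact Or.inr (Or.inr (Or.inr (Or.inr h)))
  -- four distinct clique vertices
  obtain ⟨w₁, hw₁W⟩ : W.Nonempty := (Set.ncard_pos W.toFinite).mp (by omega)
  obtain ⟨w₂, hw₂'⟩ : (W \ {w₁}).Nonempty := by
    refine (Set.ncard_pos (Set.toFinite _)).mp ?_
    rw [Set.ncard_diff_singleton_of_mem hw₁W]
    omega
  obtain ⟨hw₂W, h21'⟩ := hw₂'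
  have h21 : w₂ ≠ w₁ := h21'
  obtain ⟨w₃, hw₃'⟩ : ((W \ {w₁}) \ {w₂}).Nonempty := by
    refine (Set.ncard_pos (Set.toFinite _)).mp ?_
    rw [Set.ncard_diff_singleton_of_mem ((Set.mem_diff _).mpr ⟨hw₂W, h21'⟩),
      Set.ncard_diff_singleton_of_mem hw₁W]
    omega
  obtain ⟨⟨hw₃W, h31'⟩, h32'⟩ := hw₃'
  have h31 : w₃ ≠ w₁ := h31'
  have h32 : w₃ ≠ w₂ := h32'
  obtain ⟨w₄, hw₄'⟩ : (((W \ {w₁}) \ {w₂}) \ {w₃}).Nonempty := by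
    refine (Set.ncard_pos (Set.toFinite _)).mp ?_
    rw [Set.ncard_diff_singleton_of_mem ((Set.mem_diff _).mpr ⟨(Set.mem_diff _).mpr ⟨hw₃W, h31'⟩, h32'⟩),
      Set.ncard_diff_singleton_of_mem ((Set.mem_diff _).mpr ⟨hw₂W, h21'⟩),
      Set.ncard_diff_singleton_of_mem hw₁W]
    omega
  obtain ⟨⟨⟨hw₄W, h41'⟩, h42'⟩, h43'⟩ := hw₄'
  have h41 : w₄ ≠ w₁ := h41'
  have h42 : w₄ ≠ w₂ := h42'
  have h43 : w₄ ≠ w₃ := h43'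
  -- distance facts
  have hd1 : ∀ p q : V, G.Adj p q → G.dist p q = 1 :=
    fun p q h => SimpleGraph.dist_eq_one_iff_adj.mpr h
  have hd2 : ∀ p q : V, p ≠ q → ¬ G.Adj p q → 2 ≤ G.dist p q :=
    fun p q h1 h2 => dist_ge_two hG h1 h2
  have hWnea : ∀ w ∈ W, w ≠ a := fun w hw h => haW (h ▸ hw)
  have hWneb : ∀ w ∈ W, w ≠ b := fun w hw h => hbW (h ▸ hw)
  -- twin property within W
  have htwinWW : ∀ w ∈ W, ∀ w' ∈ W, ∀ z : V, z ≠ w → z ≠ w' →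
      (G.Adj w z ↔ G.Adj w' z) := by
    intro w hw w' hw' z hzw hzw'
    by_cases hzu : z = u₀
    · rw [hzu] at hzw hzw' ⊢
      exact iff_of_true (hclique w hw u₀ hu₀ hzw.symm) (hclique w' hw' u₀ hu₀ hzw'.symm)
    · exact ((twin_adj_iff (hWt w hw) z hzu hzw).symm).trans
        (twin_adj_iff (hWt w' hw') z hzu hzw')
  -- Lower bound
  have hlow : ∀ k ∈ {k | ∃ P : Set (Set V), IsLocatingPartition G P ∧ P.ncard = k},
      n - 3 ≤ k := by
    rintro k ⟨P, ⟨⟨hPe, hPu⟩, hPl⟩, rfl⟩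
    have hptall : ∀ c : V, ∃ S, (S ∈ P ∧ c ∈ S) ∧ ∀ T, (T ∈ P ∧ c ∈ T) → T = S :=
      fun c => hPu c
    choose pt hpt huniq using hptall
    have hSne : ∀ S ∈ P, S.Nonempty := fun S hS =>
      Set.nonempty_iff_ne_empty.mpr (fun h => hPe (h ▸ hS))
    have hinj : Set.InjOn pt W := by
      intro w hw w' hw' heq
      apply hPl w w'
      intro S hS
      by_cases hwS : w ∈ S
      · have hSw : S = pt w := huniq w S ⟨hS, hwS⟩
        have hw'S : w' ∈ S := by rw [hSw, heq]; exact (hpt w').2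
        rw [setDist_eq_zero_of_mem hwS, setDist_eq_zero_of_mem hw'S]
      · have hw'S : w' ∉ S := by
          intro h
          apply hwS
          have hh : S = pt w' := huniq w' S ⟨hS, h⟩
          rw [hh, ← heq]
          exact (hpt w).2
        unfold setDist
        congr 1
        apply Set.image_congr
        intro z hz
        exact dist_eq_of_twin hG (htwinWW w hw w' hw') z
          (fun h => hwS (h ▸ hz)) (fun h => hw'S (h ▸ hz))
    have himgsub : pt '' W ⊆ P := by
      rintro S ⟨w, hw, rfl⟩
      exact (hpt w).1
    have hcard1 : n - 4 ≤ P.ncard := by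
      have h1 : (pt '' W).ncard = n - 4 := by
        rw [Set.ncard_image_of_injOn hinj, hWcard]
      have h2 : (pt '' W).ncard ≤ P.ncard := Set.ncard_le_ncard himgsub (Set.toFinite _)
      omega
    by_contra hk
    push_neg at hk
    have hPcard : P.ncard = n - 4 := by omega
    have himg : pt '' W = P := by
      apply Set.eq_of_subset_of_ncard_le himgsub _ (Set.toFinite _)
      rw [Set.ncard_image_of_injOn hinj, hWcard, hPcard]
    obtain ⟨w₀, hw₀W, hw₀⟩ : ∃ w₀ ∈ W, pt w₀ = pt x := by
      have hx : pt x ∈ P := (hpt x).1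
      rw [← himg] at hx
      exact hx
    have hxw₀ : x = w₀ := by
      apply hPl
      intro S hS
      by_cases hxS : x ∈ S
      · have hSx : S = pt x := huniq x S ⟨hS, hxS⟩
        have hw₀S : w₀ ∈ S := by rw [hSx, ← hw₀]; exact (hpt w₀).2
        rw [setDist_eq_zero_of_mem hxS, setDist_eq_zero_of_mem hw₀S]
      · have hw₀S : w₀ ∉ S := by
          intro h
          apply hxS
          have hh : S = pt w₀ := huniq w₀ S ⟨hS, h⟩
          rw [hh, hw₀]
          exact (hpt x).2
        obtain ⟨w', hw'W, hw'⟩ : ∃ w' ∈ W, pt w' = S := by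
          rw [← himg] at hS
          exact hS
        have hw'S : w' ∈ S := by rw [← hw']; exact (hpt w').2
        have hw'x : w' ≠ x := fun h => hxS (h ▸ hw'S)
        have hw'w₀ : w' ≠ w₀ := fun h => hw₀S (h ▸ hw'S)
        have e1 : setDist G x S ≤ 1 := by
          have h := setDist_le (G := G) (u := x) hw'S
          rwa [hd1 x w' (hadjWx w' hw'W).symm] at h
        have e2 : 1 ≤ setDist G x S := one_le_setDist hG (hSne S hS) hxS
        have e3 : setDist G w₀ S ≤ 1 := by
          have h := setDist_le (G := G) (u := w₀) hw'S
          rwa [hd1 w₀ w' (hclique w₀ hw₀W w' hw'W hw'w₀.symm)] at h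
        have e4 : 1 ≤ setDist G w₀ S := one_le_setDist hG (hSne S hS) hw₀S
        omega
    exact hxW (hxw₀ ▸ hw₀W)
  have hdecD : ∀ v : V, v ∈ W ∨ v = a ∨ v = x ∨ v = y ∨ v = b := by
    intro v
    rcases hdec v with h | h | h | h | h
    exacts [Or.inl h, Or.inr (Or.inr (Or.inl h)), Or.inr (Or.inr (Or.inr (Or.inl h))),
      Or.inr (Or.inl h), Or.inr (Or.inr (Or.inr (Or.inr h)))]
  have hdecE : ∀ v : V, v ∈ W ∨ v = b ∨ v = x ∨ v = y ∨ v = a := by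
    intro v
    rcases hdec v with h | h | h | h | h
    exacts [Or.inl h, Or.inr (Or.inr (Or.inl h)), Or.inr (Or.inr (Or.inr (Or.inl h))),
      Or.inr (Or.inr (Or.inr (Or.inr h))), Or.inr (Or.inl h)]
  -- Upper bound
  have hup : ∃ P : Set (Set V), IsLocatingPartition G P ∧ P.ncard = W.ncard + 1 := by
    by_cases hxyadj : G.Adj x y
    · -- twin-exclusion facts
      have hxor : G.Adj x a ∨ G.Adj x b := by
        by_contra hcon
        push_neg at hcon
        obtain ⟨hxa, hxb⟩ := hcon
        have htw : IsTwin G u₀ x := by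
          unfold IsTwin
          ext z
          simp only [Set.mem_diff, SimpleGraph.mem_neighborSet, Set.mem_singleton_iff]
          constructor
          · rintro ⟨hadj, hzx⟩
            refine ⟨?_, (G.ne_of_adj hadj).symm⟩
            rcases hdec z with h | h | h | h | h
            · exact (hadjWx z h).symm
            · exact absurd h hzx
            · rw [h]; exact hxyadj
            · rw [h] at hadj; exact absurd hadj (hnoadja u₀ hu₀)
            · rw [h] at hadj; exact absurd hadj (hnoadjb u₀ hu₀)
          · rintro ⟨hadj, hzu⟩
            refine ⟨?_, (G.ne_of_adj hadj).symm⟩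
            rcases hdec z with h | h | h | h | h
            · exact hclique u₀ hu₀ z h (fun hh => hzu hh.symm)
            · rw [h] at hadj; exact absurd hadj G.irrefl
            · rw [h]; exact hadjWy u₀ hu₀
            · rw [h] at hadj; exact absurd hadj hxa
            · rw [h] at hadj; exact absurd hadj hxb
        have : x ∈ W := by rw [hWu]; exact htw
        exact hxW this
      have hyor : G.Adj y a ∨ G.Adj y b := by
        by_contra hcon
        push_neg at hcon
        obtain ⟨hya, hyb⟩ := hcon
        have htw : IsTwin G u₀ y := by
          unfold IsTwin
          ext z
          simp only [Set.mem_diff, SimpleGraph.mem_neighborSet, Set.mem_singleton_iff]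
          constructor
          · rintro ⟨hadj, hzy⟩
            refine ⟨?_, (G.ne_of_adj hadj).symm⟩
            rcases hdec z with h | h | h | h | h
            · exact (hadjWy z h).symm
            · rw [h]; exact hxyadj.symm
            · exact absurd h hzy
            · rw [h] at hadj; exact absurd hadj (hnoadja u₀ hu₀)
            · rw [h] at hadj; exact absurd hadj (hnoadjb u₀ hu₀)
          · rintro ⟨hadj, hzu⟩
            refine ⟨?_, (G.ne_of_adj hadj).symm⟩
            rcases hdec z with h | h | h | h | h
            · exact hclique u₀ hu₀ z h (fun hh => hzu hh.symm)
            · rw [h]; exact hadjWx u₀ hu₀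
            · rw [h] at hadj; exact absurd hadj G.irrefl
            · rw [h] at hadj; exact absurd hadj hya
            · rw [h] at hadj; exact absurd hadj hyb
        have : y ∈ W := by rw [hWu]; exact htw
        exact hyW this
      by_cases hDa : G.Adj x a ∧ G.Adj y a
      · -- construction D
        refine constructADE hG W a x y b w₁ w₂ w₃ w₄ hw₁W hw₂W hw₃W hw₄W
          h21.symm h31.symm h41.symm h32.symm h42.symm h43.symm
          haW hxW hyW hbW hax hay hab hxy hbx.symm hby.symm
          hdecD ?_ ?_ ?_
        · left
          have e1 : G.dist x a = 1 := hd1 _ _ hDa.1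
          have e2 : 2 ≤ G.dist w₁ a := hd2 _ _ (hWnea w₁ hw₁W) (hnoadja w₁ hw₁W)
          omega
        · left
          have e1 : G.dist y a = 1 := hd1 _ _ hDa.2
          have e2 : 2 ≤ G.dist w₂ a := hd2 _ _ (hWnea w₂ hw₂W) (hnoadja w₂ hw₂W)
          omega
        · right
          have e1 : 2 ≤ G.dist b w₄ :=
            hd2 _ _ (hWneb w₄ hw₄W).symm (fun h => hnoadjb w₄ hw₄W h.symm)
          have e2 : G.dist w₃ w₄ = 1 := hd1 _ _ (hclique w₃ hw₃W w₄ hw₄W h43.symm)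
          omega
      by_cases hDb : G.Adj x b ∧ G.Adj y b
      · -- construction E
        refine constructADE hG W b x y a w₁ w₂ w₃ w₄ hw₁W hw₂W hw₃W hw₄W
          h21.symm h31.symm h41.symm h32.symm h42.symm h43.symm
          hbW hxW hyW haW hbx hby hab.symm hxy hax.symm hay.symm
          hdecE ?_ ?_ ?_
        · left
          have e1 : G.dist x b = 1 := hd1 _ _ hDb.1
          have e2 : 2 ≤ G.dist w₁ b := hd2 _ _ (hWneb w₁ hw₁W) (hnoadjb w₁ hw₁W)
          omega
        · left
          have e1 : G.dist y b = 1 := hd1 _ _ hDb.2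
          have e2 : 2 ≤ G.dist w₂ b := hd2 _ _ (hWneb w₂ hw₂W) (hnoadjb w₂ hw₂W)
          omega
        · right
          have e1 : 2 ≤ G.dist a w₄ :=
            hd2 _ _ (hWnea w₄ hw₄W).symm (fun h => hnoadja w₄ hw₄W h.symm)
          have e2 : G.dist w₃ w₄ = 1 := hd1 _ _ (hclique w₃ hw₃W w₄ hw₄W h43.symm)
          omega
      · -- construction K
        have hKdec : ∀ v : V, v ∈ W ∨ v = x ∨ v = y ∨ v = a ∨ v = b := hdec
        have e3 : 2 ≤ G.dist w₁ a := hd2 _ _ (hWnea w₁ hw₁W) (hnoadja w₁ hw₁W)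
        have e4 : 2 ≤ G.dist w₁ b := hd2 _ _ (hWneb w₁ hw₁W) (hnoadjb w₁ hw₁W)
        have e5 : 2 ≤ G.dist w₂ a := hd2 _ _ (hWnea w₂ hw₂W) (hnoadja w₂ hw₂W)
        have e6 : 2 ≤ G.dist w₂ b := hd2 _ _ (hWneb w₂ hw₂W) (hnoadjb w₂ hw₂W)
        have e7 : 2 ≤ G.dist a w₁ :=
          hd2 _ _ (hWnea w₁ hw₁W).symm (fun h => hnoadja w₁ hw₁W h.symm)
        have e8 : 2 ≤ G.dist b w₁ :=
          hd2 _ _ (hWneb w₁ hw₁W).symm (fun h => hnoadjb w₁ hw₁W h.symm)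
        rcases hxor with hxa | hxb
        · -- x ~ a, so ¬ y ~ a, so y ~ b, so ¬ x ~ b
          have hya : ¬ G.Adj y a := fun h => hDa ⟨hxa, h⟩
          have hyb : G.Adj y b := hyor.resolve_left hya
          have hxb : ¬ G.Adj x b := fun h => hDb ⟨h, hyb⟩
          refine constructK hG W x y a b w₁ w₂ hw₁W hw₂W h21.symm
            hxW hyW haW hbW hxy hax.symm hbx.symm hay.symm hby.symm hab
            hdec ?_ ?_ ?_
          · have e1 : G.dist x a = 1 := hd1 _ _ hxa
            have l1 : min (G.dist x a) (G.dist x b) ≤ 1 := le_trans (min_le_left _ _) e1.le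
            have l2 : 2 ≤ min (G.dist w₁ a) (G.dist w₁ b) := le_min e3 e4
            omega
          · have e1 : G.dist y b = 1 := hd1 _ _ hyb
            have l1 : min (G.dist y a) (G.dist y b) ≤ 1 := le_trans (min_le_right _ _) e1.le
            have l2 : 2 ≤ min (G.dist w₂ a) (G.dist w₂ b) := le_min e5 e6
            omega
          · have e1 : G.dist a x = 1 := hd1 _ _ hxa.symm
            have l1 : min (G.dist a w₁) (G.dist a x) ≤ 1 := le_trans (min_le_right _ _) e1.le
            have e2 : 2 ≤ G.dist b x := hd2 _ _ hbx (fun h => hxb h.symm)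
            have l2 : 2 ≤ min (G.dist b w₁) (G.dist b x) := le_min e8 e2
            omega
        · -- x ~ b, so ¬ y ~ b, so y ~ a, so ¬ x ~ a
          have hyb : ¬ G.Adj y b := fun h => hDb ⟨hxb, h⟩
          have hya : G.Adj y a := hyor.resolve_right hyb
          have hxa : ¬ G.Adj x a := fun h => hDa ⟨h, hya⟩
          refine constructK hG W x y a b w₁ w₂ hw₁W hw₂W h21.symm
            hxW hyW haW hbW hxy hax.symm hbx.symm hay.symm hby.symm hab
            hdec ?_ ?_ ?_
          · have e1 : G.dist x b = 1 := hd1 _ _ hxb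
            have l1 : min (G.dist x a) (G.dist x b) ≤ 1 := le_trans (min_le_right _ _) e1.le
            have l2 : 2 ≤ min (G.dist w₁ a) (G.dist w₁ b) := le_min e3 e4
            omega
          · have e1 : G.dist y a = 1 := hd1 _ _ hya
            have l1 : min (G.dist y a) (G.dist y b) ≤ 1 := le_trans (min_le_left _ _) e1.le
            have l2 : 2 ≤ min (G.dist w₂ a) (G.dist w₂ b) := le_min e5 e6
            omega
          · have e1 : G.dist b x = 1 := hd1 _ _ hxb.symm
            have l1 : min (G.dist b w₁) (G.dist b x) ≤ 1 := le_trans (min_le_right _ _) e1.le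
            have e2 : 2 ≤ G.dist a x := hd2 _ _ hax (fun h => hxa h.symm)
            have l2 : 2 ≤ min (G.dist a w₁) (G.dist a x) := le_min e7 e2
            omega
    · -- construction A : x not adjacent to y
      refine constructADE hG W x y a b w₁ w₂ w₃ w₄ hw₁W hw₂W hw₃W hw₄W
        h21.symm h31.symm h41.symm h32.symm h42.symm h43.symm
        hxW hyW haW hbW hxy hax.symm hbx.symm hay.symm hby.symm hab
        hdec ?_ ?_ ?_
      · left
        have e1 : 2 ≤ G.dist y x := hd2 _ _ hxy.symm (fun h => hxyadj h.symm)
        have e2 : G.dist w₁ x = 1 := hd1 _ _ (hadjWx w₁ hw₁W)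
        omega
      · right
        have e1 : 2 ≤ G.dist a w₄ :=
          hd2 _ _ (hWnea w₄ hw₄W).symm (fun h => hnoadja w₄ hw₄W h.symm)
        have e2 : G.dist w₂ w₄ = 1 := hd1 _ _ (hclique w₂ hw₂W w₄ hw₄W h42.symm)
        omega
      · right
        have e1 : 2 ≤ G.dist b w₄ :=
          hd2 _ _ (hWneb w₄ hw₄W).symm (fun h => hnoadjb w₄ hw₄W h.symm)
        have e2 : G.dist w₃ w₄ = 1 := hd1 _ _ (hclique w₃ hw₃W w₄ hw₄W h43.symm)
        omega
  -- combine
  obtain ⟨P, hP, hPc⟩ := hup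
  have hmem : (n - 3) ∈ {k | ∃ P : Set (Set V), IsLocatingPartition G P ∧ P.ncard = k} :=
    ⟨P, hP, by rw [hPc, hWcard]; omega⟩
  unfold partitionDim
  exact le_antisymm (Nat.sInf_le hmem) (hlow _ (Nat.sInf_mem ⟨_, hmem⟩))
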